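/- arXiv:1905.08429 — 5 statements merged into one kernel-verified Lean document; each statement's English description precedes it below -/
import Mathlib

section
/- (Complex Pythagorean theorem, measure form) Let H = ⊕ᵢ Wᵢ be an orthogonal decomposition of a complex Hilbert space into finitely many mutually orthogonal closed complex subspaces, v ∈ H nonzero, and Pᵢ : ℂv → Wᵢ the orthogonal projections. Then for any measurable set U ⊂ ℂv, Σᵢ |Pᵢ(U)| = |U|, where |·| denotes 2-dimensional Hausdorff measure. -/
open MeasureTheory
open scoped MeasureTheory

/-- Auxiliary: 2-dimensional Hausdorff measure scaling for the map `c ↦ c • w` from `ℂ`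
into a complex normed space. -/
lemma haus2_smul_image {E : Type*} [NormedAddCommGroup E] [NormedSpace ℂ E]
    [MeasurableSpace E] [BorelSpace E] (w : E) (s : Set ℂ) :
    μH[2] ((fun c : ℂ => c • w) '' s) = ((‖w‖₊ : ENNReal)) ^ 2 * μH[2] s := by
  obtain rfl | hw := eq_or_ne w 0
  · haveI := MeasureTheory.Measure.noAtoms_hausdorff (X := E) (show (0:ℝ) < 2 by norm_num)
    obtain rfl | hs := s.eq_empty_or_nonempty
    · simp
    · simp [hs]
  have hn : ‖w‖ ≠ 0 := norm_ne_zero_iff.mpr hw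
  have iso_smul : Isometry (LinearMap.toSpanSingleton ℂ E (‖w‖⁻¹ • w)) := by
    refine AddMonoidHomClass.isometry_of_norm _ fun x => ?_
    rw [LinearMap.toSpanSingleton_apply, norm_smul, norm_smul, norm_inv, norm_norm,
      inv_mul_cancel₀ hn, mul_one]
  have key : μH[2] (((‖w‖ : ℝ) • ·) ''
      (LinearMap.toSpanSingleton ℂ E (‖w‖⁻¹ • w) '' s)) = ((‖w‖₊ : ENNReal)) ^ 2 * μH[2] s := by
    rw [Set.image_smul, Measure.hausdorffMeasure_smul₀ (by norm_num : (0:ℝ) ≤ 2) hn,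
      iso_smul.hausdorffMeasure_image (Or.inl (by norm_num : (0:ℝ) ≤ 2))]
    simp only [nnnorm_norm]
    rw [ENNReal.smul_def, smul_eq_mul]
    congr 1
    rw [ENNReal.coe_rpow_of_nonneg _ (by norm_num : (0:ℝ) ≤ 2),
      show ((2:ℝ)) = ((2:ℕ):ℝ) by norm_num, ENNReal.rpow_natCast]
  rw [← key, Set.image_image]
  congr 1
  ext x
  simp only [Set.mem_image, LinearMap.toSpanSingleton_apply]
  refine exists_congr fun c => and_congr_right fun _ => ?_
  rw [smul_comm, smul_inv_smul₀ hn]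

/-- Complex Pythagorean theorem, measure form: if `H = ⊕ᵢ Wᵢ` is an orthogonal
decomposition into finitely many mutually orthogonal closed complex subspaces and `v ≠ 0`,
then for any measurable `U ⊆ ℂv`, `Σᵢ |Pᵢ(U)| = |U|` for 2-dimensional Hausdorff measure. -/
theorem stmt4 {H : Type*} [NormedAddCommGroup H] [InnerProductSpace ℂ H] [CompleteSpace H]
    [MeasurableSpace H] [BorelSpace H]
    {n : ℕ} (W : Fin n → Submodule ℂ H) [∀ i, CompleteSpace (W i)]
    (horth : ∀ i j, i ≠ j → ∀ x ∈ W i, ∀ y ∈ W j, (inner ℂ x y : ℂ) = 0)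
    (hsum : (⨆ i, W i) = ⊤)
    (v : H) (hv : v ≠ 0)
    (U : Set H) (hU : U ⊆ (Submodule.span ℂ {v} : Submodule ℂ H)) (hUm : MeasurableSet U) :
    ∑ i, μH[2] ((fun x => (Submodule.orthogonalProjectionOnto (W i) x : H)) '' U) = μH[2] U := by
  have hV : OrthogonalFamily ℂ (fun i => (W i : Type _)) (fun i => (W i).subtypeₗᵢ) :=
    fun i j hij x y => horth i j hij x x.2 y y.2
  -- U is the image under `c ↦ c • v` of a set U' ⊆ ℂ
  set U' : Set ℂ := (fun c : ℂ => c • v) ⁻¹' U with hU'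
  have hUeq : U = (fun c : ℂ => c • v) '' U' := by
    rw [hU', Set.image_preimage_eq_of_subset]
    intro x hx
    obtain ⟨a, ha⟩ := Submodule.mem_span_singleton.mp (hU hx)
    exact ⟨a, ha⟩
  -- projections of the line
  set w : Fin n → H := fun i => (Submodule.orthogonalProjectionOnto (W i) v : H) with hw
  have himg : ∀ i, (fun x => (Submodule.orthogonalProjectionOnto (W i) x : H)) '' U
      = (fun c : ℂ => c • w i) '' U' := by
    intro i
    rw [hUeq, Set.image_image]
    congr 1
    ext c
    simp [_root_.map_smul, hw]
  -- Pythagoras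
  have hsumv : (∑ i, w i) = v :=
    by
    have := hV.sum_projection_of_mem_iSup v (by rw [hsum]; trivial)
    simpa [hw] using this
  have hpyth : ∑ i, (‖w i‖₊ : ENNReal) ^ 2 = (‖v‖₊ : ENNReal) ^ 2 := by
    have h1 : ‖∑ i, (W i).subtypeₗᵢ (Submodule.orthogonalProjectionOnto (W i) v)‖ ^ 2
        = ∑ i, ‖Submodule.orthogonalProjectionOnto (W i) v‖ ^ 2 :=
      hV.norm_sum (fun i => Submodule.orthogonalProjectionOnto (W i) v) Finset.univ
    have h2 : ‖v‖ ^ 2 = ∑ i, ‖w i‖ ^ 2 := by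
      rw [← hsumv]
      convert h1 using 2 <;> simp [hw]
    have h3 : ‖v‖₊ ^ 2 = ∑ i, ‖w i‖₊ ^ 2 := by
      have := h2
      ext
      push_cast
      simpa using h2
    rw [← ENNReal.coe_pow]
    rw [h3]
    push_cast
    ring
  calc ∑ i, μH[2] ((fun x => (Submodule.orthogonalProjectionOnto (W i) x : H)) '' U)
      = ∑ i, (‖w i‖₊ : ENNReal) ^ 2 * μH[2] U' := by
        refine Finset.sum_congr rfl fun i _ => ?_
        rw [himg i, haus2_smul_image]
    _ = (∑ i, (‖w i‖₊ : ENNReal) ^ 2) * μH[2] U' := by rw [Finset.sum_mul]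
    _ = (‖v‖₊ : ENNReal) ^ 2 * μH[2] U' := by rw [hpyth]
    _ = μH[2] U := by rw [hUeq, haus2_smul_image]
end

section
/- For a nonzero vector Ψ = Σᵢ cᵢ|i⟩ in a complex Hilbert space expanded in an orthonormal basis {|i⟩}, the projection factor of the complex line ℂΨ onto the complex line ℂ|i⟩ equals |cᵢ|²/‖Ψ‖², i.e. it equals the Born rule probability |⟨i|Ψ⟩|²/‖Ψ‖² of result i. -/
open MeasureTheory
open scoped MeasureTheory ENNReal NNReal Pointwise

lemma aux_smul_image {H : Type*} [NormedAddCommGroup H] [NormedSpace ℂ H]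
    [MeasurableSpace H] [BorelSpace H] (w : H) (s : Set ℂ) :
    μH[2] ((fun z : ℂ => z • w) '' s) = (‖w‖₊ : ℝ≥0∞) ^ (2:ℝ) * μH[2] s := by
  rcases eq_or_ne w 0 with rfl | hw
  · have hsub : ((fun z : ℂ => z • (0:H)) '' s) ⊆ {0} := by
      rintro x ⟨z, _, rfl⟩; simp
    have h0 : μH[2] ((fun z : ℂ => z • (0:H)) '' s) = 0 := by
      haveI := MeasureTheory.Measure.noAtoms_hausdorff H (show (0:ℝ) < 2 by norm_num)
      exact measure_mono_null hsub (measure_singleton 0)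
    rw [h0]
    rw [nnnorm_zero, ENNReal.coe_zero, ENNReal.zero_rpow_of_pos (by norm_num), zero_mul]
  · set u : H := ((‖w‖⁻¹ : ℝ) : ℂ) • w with hu
    have hn : ‖w‖ ≠ 0 := norm_ne_zero_iff.mpr hw
    have hiso : Isometry (LinearMap.toSpanSingleton ℂ H u) := by
      refine AddMonoidHomClass.isometry_of_norm _ fun x => ?_
      simp only [LinearMap.toSpanSingleton_apply, hu, norm_smul, Complex.norm_real,
        norm_inv, norm_norm]
      rw [inv_mul_cancel₀ hn, mul_one]
    have hdecomp : (fun z : ℂ => z • w)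
        = (LinearMap.toSpanSingleton ℂ H u) ∘ (fun z : ℂ => ((‖w‖ : ℝ) : ℂ) • z) := by
      funext z
      simp only [Function.comp_apply, LinearMap.toSpanSingleton_apply, hu, smul_smul,
        smul_eq_mul]
      congr 1
      rw [mul_comm ((‖w‖:ℂ)) z, mul_assoc, ← Complex.ofReal_mul, mul_inv_cancel₀ hn,
        Complex.ofReal_one, mul_one]
    rw [hdecomp, Set.image_comp,
      hiso.hausdorffMeasure_image (Or.inl (by norm_num : (0:ℝ) ≤ 2))]
    have himg : (fun z : ℂ => ((‖w‖ : ℝ) : ℂ) • z) '' s = ((‖w‖ : ℝ) : ℂ) • s := rfl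
    rw [himg, MeasureTheory.Measure.hausdorffMeasure_smul₀ (by norm_num : (0:ℝ) ≤ 2)
      (by exact_mod_cast hn : ((‖w‖ : ℝ) : ℂ) ≠ 0) s]
    rw [ENNReal.smul_def, smul_eq_mul, ← ENNReal.coe_rpow_of_ne_zero (by simpa using hn)]
    congr 3
    simp

lemma aux_nnnorm_rpow_two {H : Type*} [NormedAddCommGroup H] (x : H) :
    (‖x‖₊ : ℝ≥0∞) ^ (2:ℝ) = ENNReal.ofReal (‖x‖ ^ 2) := by
  rw [ENNReal.rpow_two, ← enorm_eq_nnnorm, ← ofReal_norm, sq, sq,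
    ← ENNReal.ofReal_mul (norm_nonneg x)]

/-- For a nonzero `Ψ = Σᵢ cᵢ|i⟩` expanded in an orthonormal family, the
projection factor of `ℂΨ` onto `ℂ|i⟩` (the ratio of 2-dimensional Hausdorff measures of a
measurable `U ⊆ ℂΨ` of finite positive measure and of its orthogonal projection) equals
`|cᵢ|²/‖Ψ‖²`, i.e. the Born rule probability `|⟨i|Ψ⟩|²/‖Ψ‖²`. -/
theorem stmt5 {H : Type*} [NormedAddCommGroup H] [InnerProductSpace ℂ H] [CompleteSpace H]
    [MeasurableSpace H] [BorelSpace H]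
    {ι : Type*} [Fintype ι] (e : ι → H) (he : Orthonormal ℂ e)
    (c : ι → ℂ) (Ψ : H) (hΨ : Ψ = ∑ i, c i • e i) (hΨ0 : Ψ ≠ 0) (i : ι)
    (U : Set H) (hU : U ⊆ (Submodule.span ℂ {Ψ} : Submodule ℂ H)) (hUm : MeasurableSet U)
    (hU0 : 0 < μH[2] U) (hUt : μH[2] U < ⊤) :
    μH[2] ((fun x => ((Submodule.span ℂ {e i}).orthogonalProjectionOnto x : H)) '' U) / μH[2] U
        = ENNReal.ofReal (‖c i‖ ^ 2 / ‖Ψ‖ ^ 2)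
      ∧ ‖c i‖ ^ 2 / ‖Ψ‖ ^ 2 = ‖(inner ℂ (e i) Ψ : ℂ)‖ ^ 2 / ‖Ψ‖ ^ 2 := by
  have hc : (inner ℂ (e i) Ψ : ℂ) = c i := by
    rw [hΨ]; exact he.inner_right_fintype c i
  have hei : ‖e i‖ = 1 := he.1 i
  -- parametrize U
  set V : Set ℂ := (fun z : ℂ => z • Ψ) ⁻¹' U with hV
  have hrange : U ⊆ Set.range (fun z : ℂ => z • Ψ) := by
    intro x hx
    rcases (Submodule.mem_span_singleton).mp (hU hx) with ⟨a, ha⟩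
    exact ⟨a, ha⟩
  have hUeq : (fun z : ℂ => z • Ψ) '' V = U := Set.image_preimage_eq_of_subset hrange
  -- projection formula on the line ℂΨ
  have hproj : ∀ z : ℂ,
      ((Submodule.span ℂ {e i}).orthogonalProjectionOnto (z • Ψ) : H) = z • (c i • e i) := by
    intro z
    show (Submodule.span ℂ {e i}).starProjection (z • Ψ) = _
    rw [Submodule.starProjection_singleton, inner_smul_right, hc, hei]
    simp [smul_smul]
  have himg : (fun x => ((Submodule.span ℂ {e i}).orthogonalProjectionOnto x : H)) '' U
      = (fun z : ℂ => z • (c i • e i)) '' V := by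
    rw [← hUeq, Set.image_image]
    exact Set.image_congr fun z _ => hproj z
  have hμU : μH[2] U = (‖Ψ‖₊ : ℝ≥0∞) ^ (2:ℝ) * μH[2] V := by
    rw [← hUeq]; exact aux_smul_image Ψ V
  have hμP : μH[2] ((fun x => ((Submodule.span ℂ {e i}).orthogonalProjectionOnto x : H)) '' U)
      = (‖c i • e i‖₊ : ℝ≥0∞) ^ (2:ℝ) * μH[2] V := by
    rw [himg]; exact aux_smul_image (c i • e i) V
  have hΨn : ‖Ψ‖ ≠ 0 := norm_ne_zero_iff.mpr hΨ0
  have hb0 : (‖Ψ‖₊ : ℝ≥0∞) ^ (2:ℝ) ≠ 0 := by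
    simp [ENNReal.rpow_eq_zero_iff, nnnorm_eq_zero, hΨ0]
  have hbt : (‖Ψ‖₊ : ℝ≥0∞) ^ (2:ℝ) ≠ ⊤ := by
    exact ENNReal.rpow_ne_top_of_nonneg (by norm_num) ENNReal.coe_ne_top
  have hm0 : μH[2] V ≠ 0 := by
    intro h
    rw [hμU, h, mul_zero] at hU0
    exact lt_irrefl _ hU0
  have hmt : μH[2] V ≠ ⊤ := by
    intro h
    rw [hμU, h, ENNReal.mul_top hb0] at hUt
    exact lt_irrefl _ hUt
  constructor
  · rw [hμU, hμP, ENNReal.mul_div_mul_right _ _ hm0 hmt, aux_nnnorm_rpow_two,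
      aux_nnnorm_rpow_two, ENNReal.ofReal_div_of_pos (by positivity),
      norm_smul, hei, mul_one]
  · rw [hc]
end

section
/- Let Ψ be a nonzero vector in a complex Hilbert space with orthogonal decomposition Ψ = Σᵢ ψᵢ into finitely many mutually orthogonal nonzero components ψᵢ. For any measurable U ⊂ ℂΨ with 0 < |U| < ∞, setting W_{U,i} = Pᵢ(U) (where Pᵢ : ℂΨ → ℂψᵢ is the orthogonal projection), the fraction f_{U,i} = |W_{U,i}| / Σⱼ|W_{U,j}| equals ‖ψᵢ‖²/‖Ψ‖² and is independent of U. -/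
open MeasureTheory
open scoped MeasureTheory ENNReal NNReal

/-- The image of a set of scalars under `c ↦ c • v` has Hausdorff 2-measure
`‖v‖₊ ^ 2` times the measure of the original set. -/
lemma smul_image_hausdorff {H : Type*} [NormedAddCommGroup H] [InnerProductSpace ℂ H]
    [MeasurableSpace H] [BorelSpace H] (v : H) (hv : v ≠ 0) (S : Set ℂ) :
    μH[2] ((fun c : ℂ => c • v) '' S) = (‖v‖₊ : ℝ≥0∞) ^ (2 : ℕ) * μH[2] S := by
  have hdist : ∀ a b : ℂ, dist (a • v) (b • v) = ‖v‖ * dist a b := by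
    intro a b
    rw [dist_eq_norm, ← sub_smul, norm_smul, dist_eq_norm, mul_comm]
  have hL : LipschitzWith ‖v‖₊ (fun c : ℂ => c • v) :=
    LipschitzWith.of_dist_le_mul fun a b => le_of_eq (hdist a b)
  have hvn : ‖v‖ ≠ 0 := norm_ne_zero_iff.mpr hv
  have hA : AntilipschitzWith ‖v‖₊⁻¹ (fun c : ℂ => c • v) := by
    apply AntilipschitzWith.of_le_mul_dist
    intro a b
    rw [hdist a b]
    rw [NNReal.coe_inv, coe_nnnorm]
    field_simp
    exact le_rfl
  have h1 := hL.hausdorffMeasure_image_le (by norm_num : (0:ℝ) ≤ 2) S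
  have h2 := hA.le_hausdorffMeasure_image (by norm_num : (0:ℝ) ≤ 2) S
  have hcast : ∀ K : ℝ≥0, (K : ℝ≥0∞) ^ (2 : ℝ) = (K : ℝ≥0∞) ^ (2 : ℕ) := by
    intro K
    rw [show (2:ℝ) = ((2:ℕ):ℝ) by norm_num, ENNReal.rpow_natCast]
  rw [hcast] at h1 h2
  have hne : (‖v‖₊ : ℝ≥0∞) ^ (2:ℕ) ≠ 0 := by
    simp [pow_ne_zero_iff, hv]
  have hnt : (‖v‖₊ : ℝ≥0∞) ^ (2:ℕ) ≠ ⊤ := by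
    exact ENNReal.pow_ne_top ENNReal.coe_ne_top
  refine le_antisymm h1 ?_
  calc (‖v‖₊ : ℝ≥0∞) ^ (2:ℕ) * μH[2] S
      ≤ (‖v‖₊ : ℝ≥0∞) ^ (2:ℕ) * ((‖v‖₊⁻¹ : ℝ≥0) ^ (2:ℕ) * μH[2] ((fun c : ℂ => c • v) '' S)) :=
        mul_le_mul_right h2 _
    _ = μH[2] ((fun c : ℂ => c • v) '' S) := by
        rw [← mul_assoc]
        rw [show ((‖v‖₊⁻¹ : ℝ≥0) : ℝ≥0∞) = (‖v‖₊ : ℝ≥0∞)⁻¹ by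
          simp [ENNReal.coe_inv (nnnorm_ne_zero_iff.mpr hv)]]
        rw [← mul_pow, ENNReal.mul_inv_cancel (by simpa using hv) ENNReal.coe_ne_top,
          one_pow, one_mul]

/-- For `Ψ = Σᵢ ψᵢ` with finitely many mutually orthogonal nonzero components
and any measurable `U ⊆ ℂΨ` with `0 < |U| < ∞`, the fraction
`f_{U,i} = |Pᵢ(U)| / Σⱼ|Pⱼ(U)|` equals `‖ψᵢ‖²/‖Ψ‖²`, independently of `U`. -/
theorem stmt6 {H : Type*} [NormedAddCommGroup H] [InnerProductSpace ℂ H] [CompleteSpace H]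
    [MeasurableSpace H] [BorelSpace H]
    {n : ℕ} (ψ : Fin n → H) (hψ0 : ∀ i, ψ i ≠ 0)
    (horth : ∀ i j, i ≠ j → (inner ℂ (ψ i) (ψ j) : ℂ) = 0)
    (Ψ : H) (hΨ : Ψ = ∑ i, ψ i) (hΨ0 : Ψ ≠ 0) (i : Fin n)
    (U : Set H) (hU : U ⊆ (Submodule.span ℂ {Ψ} : Submodule ℂ H)) (hUm : MeasurableSet U)
    (hU0 : 0 < μH[2] U) (hUt : μH[2] U < ⊤) :
    μH[2] ((fun x => (Submodule.orthogonalProjection (Submodule.span ℂ {ψ i}) x : H)) '' U)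
        / ∑ j, μH[2] ((fun x => (Submodule.orthogonalProjection (Submodule.span ℂ {ψ j}) x : H)) '' U)
      = ENNReal.ofReal (‖ψ i‖ ^ 2 / ‖Ψ‖ ^ 2) := by
  -- the set of coefficients
  set S : Set ℂ := {c : ℂ | c • Ψ ∈ U} with hS
  have hUeq : U = (fun c : ℂ => c • Ψ) '' S := by
    apply Set.Subset.antisymm
    · intro x hx
      obtain ⟨c, hc⟩ := (Submodule.mem_span_singleton).mp (hU hx)
      exact ⟨c, by simpa [hS, hc] using hx, hc⟩
    · rintro x ⟨c, hc, rfl⟩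
      exact hc
  -- projection of Ψ onto span of ψ j is ψ j
  have hproj : ∀ j, ((Submodule.orthogonalProjection (Submodule.span ℂ {ψ j}) Ψ : _) : H) = ψ j := by
    intro j
    apply Submodule.eq_starProjection_of_mem_of_inner_eq_zero
      (Submodule.mem_span_singleton_self _)
    intro w hw
    obtain ⟨a, rfl⟩ := (Submodule.mem_span_singleton).mp hw
    rw [inner_smul_right]
    have : (inner ℂ (Ψ - ψ j) (ψ j) : ℂ) = 0 := by
      rw [inner_sub_left, hΨ, sum_inner]
      rw [Finset.sum_eq_single j (fun k _ hk => horth k j (by simpa using hk)) (by simp)]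
      simp
    rw [this, mul_zero]
  -- images under the projections
  have himg : ∀ j, (fun x => ((Submodule.orthogonalProjection (Submodule.span ℂ {ψ j}) x : _) : H)) '' U
      = (fun c : ℂ => c • ψ j) '' S := by
    intro j
    rw [hUeq, Set.image_image]
    apply Set.image_congr
    intro c _
    rw [_root_.map_smul]
    simp [hproj j]
  -- Pythagoras
  have hpyth : ‖Ψ‖ ^ 2 = ∑ j, ‖ψ j‖ ^ 2 := by
    have h1 : (inner ℂ Ψ Ψ : ℂ) = ∑ j, inner ℂ (ψ j) (ψ j) := by
      nth_rewrite 1 [hΨ]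
      rw [sum_inner]
      refine Finset.sum_congr rfl fun j _ => ?_
      nth_rewrite 1 [hΨ]
      rw [inner_sum]
      exact Finset.sum_eq_single j (fun k _ hk => horth j k (fun h => hk h.symm)) (by simp)
    rw [inner_self_eq_norm_sq_to_K] at h1
    simp_rw [inner_self_eq_norm_sq_to_K] at h1
    have h2 : ((‖Ψ‖ ^ 2 : ℝ) : ℂ) = ((∑ j, ‖ψ j‖ ^ 2 : ℝ) : ℂ) := by
      push_cast
      exact h1
    exact_mod_cast h2
  -- measures
  have hmeas : ∀ j, μH[2] ((fun x => ((Submodule.orthogonalProjection (Submodule.span ℂ {ψ j}) x : _) : H)) '' U)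
      = (‖ψ j‖₊ : ℝ≥0∞) ^ (2:ℕ) * μH[2] S := by
    intro j
    rw [himg j, smul_image_hausdorff (ψ j) (hψ0 j)]
  have hmeasU : μH[2] U = (‖Ψ‖₊ : ℝ≥0∞) ^ (2:ℕ) * μH[2] S := by
    rw [hUeq, smul_image_hausdorff Ψ hΨ0]
  -- μH[2] S is positive and finite
  have hS0 : μH[2] S ≠ 0 := by
    intro h
    rw [hmeasU, h, mul_zero] at hU0
    exact lt_irrefl _ hU0
  have hSt : μH[2] S ≠ ⊤ := by
    intro h
    rw [hmeasU, h, ENNReal.mul_top (by simpa [pow_ne_zero_iff] using hΨ0)] at hUt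
    exact lt_irrefl _ hUt
  -- sum of squared nnnorms
  have hsum : ∑ j, (‖ψ j‖₊ : ℝ≥0∞) ^ (2:ℕ) = (‖Ψ‖₊ : ℝ≥0∞) ^ (2:ℕ) := by
    have : ∀ v : H, (‖v‖₊ : ℝ≥0∞) ^ (2:ℕ) = ENNReal.ofReal (‖v‖ ^ 2) := by
      intro v
      rw [ENNReal.ofReal_pow (norm_nonneg v), ofReal_norm, enorm_eq_nnnorm]
    simp_rw [this]
    rw [← ENNReal.ofReal_sum_of_nonneg (fun j _ => sq_nonneg _), ← hpyth]
  rw [hmeas i]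
  simp_rw [hmeas]
  rw [← Finset.sum_mul, hsum, ENNReal.mul_div_mul_right _ _ hS0 hSt]
  have hΨpos : (0:ℝ) < ‖Ψ‖ ^ 2 := pow_pos (norm_pos_iff.mpr hΨ0) 2
  rw [ENNReal.ofReal_div_of_pos hΨpos]
  congr 1 <;>
    rw [ENNReal.ofReal_pow (norm_nonneg _), ofReal_norm, enorm_eq_nnnorm]
end

section
/- Let Ψ = Σᵢ ψᵢ be a nonzero vector in a real Hilbert space, decomposed into finitely many mutually orthogonal nonzero components ψᵢ, with Pᵢ : ℝΨ → ℝψᵢ the orthogonal projections. For any measurable U ⊂ ℝΨ with 0 < |U| < ∞ (1-dimensional Lebesgue measure), the fraction f_{U,i} = |Pᵢ(U)| / Σⱼ |Pⱼ(U)| equals ‖ψᵢ‖ / Σⱼ ‖ψⱼ‖, independent of U. -/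
open MeasureTheory
open scoped MeasureTheory ENNReal NNReal

/-- For `Ψ = Σᵢ ψᵢ` in a real Hilbert space, with finitely many mutually
orthogonal nonzero components, and any measurable `U ⊆ ℝΨ` with `0 < |U| < ∞` for
1-dimensional Hausdorff measure, the fraction `|Pᵢ(U)| / Σⱼ |Pⱼ(U)|` equals
`‖ψᵢ‖ / Σⱼ ‖ψⱼ‖`, independently of `U`. -/
theorem stmt8 {H : Type*} [NormedAddCommGroup H] [InnerProductSpace ℝ H] [CompleteSpace H]
    [MeasurableSpace H] [BorelSpace H]
    {n : ℕ} (ψ : Fin n → H) (hψ0 : ∀ i, ψ i ≠ 0)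
    (horth : ∀ i j, i ≠ j → (inner ℝ (ψ i) (ψ j) : ℝ) = 0)
    (Ψ : H) (hΨ : Ψ = ∑ i, ψ i) (hΨ0 : Ψ ≠ 0) (i : Fin n)
    (U : Set H) (hU : U ⊆ (Submodule.span ℝ {Ψ} : Submodule ℝ H)) (hUm : MeasurableSet U)
    (hU0 : 0 < μH[1] U) (hUt : μH[1] U < ⊤) :
    μH[1] ((fun x => (Submodule.orthogonalProjection (Submodule.span ℝ {ψ i}) x : H)) '' U)
        / ∑ j, μH[1] ((fun x => (Submodule.orthogonalProjection (Submodule.span ℝ {ψ j}) x : H)) '' U)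
      = ENNReal.ofReal (‖ψ i‖ / ∑ j, ‖ψ j‖) := by
  -- the set of parameters
  set T : Set ℝ := {t : ℝ | t • Ψ ∈ U} with hT
  have hUT : U = (fun t : ℝ => t • Ψ) '' T := by
    ext x
    constructor
    · intro hx
      obtain ⟨t, ht⟩ := Submodule.mem_span_singleton.mp (hU hx)
      exact ⟨t, by simpa [hT, ht] using hx, ht⟩
    · rintro ⟨t, ht, rfl⟩
      exact ht
  -- projection of Ψ onto span {ψ j} is ψ j
  have hproj : ∀ j, (Submodule.orthogonalProjection (Submodule.span ℝ {ψ j}) Ψ : H) = ψ j := by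
    intro j
    have hinner : (inner ℝ (ψ j) Ψ : ℝ) = ‖ψ j‖ ^ 2 := by
      rw [hΨ, inner_sum, Finset.sum_eq_single j]
      · exact real_inner_self_eq_norm_sq (ψ j)
      · intro k _ hk; exact horth j k (Ne.symm hk)
      · intro h; exact absurd (Finset.mem_univ j) h
    rw [Submodule.coe_orthogonalProjectionOnto_apply, Submodule.starProjection_singleton, hinner]
    have h0 : (‖ψ j‖ : ℝ) ^ 2 ≠ 0 := pow_ne_zero 2 (norm_ne_zero_iff.mpr (hψ0 j))
    simp [div_self h0]
  -- image of U under projection j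
  have himg : ∀ j, (fun x => (Submodule.orthogonalProjection (Submodule.span ℝ {ψ j}) x : H)) '' U
      = (fun t : ℝ => t • ψ j) '' T := by
    intro j
    rw [hUT, Set.image_image]
    refine Set.image_congr fun t _ => ?_
    rw [_root_.map_smul, Submodule.coe_smul, hproj j]
  have hmeas : ∀ j, μH[1] ((fun x =>
      (Submodule.orthogonalProjection (Submodule.span ℝ {ψ j}) x : H)) '' U) = ‖ψ j‖₊ • μH[1] T := by
    intro j
    rw [himg j, hausdorffMeasure_smul_right_image]
  have hUmeas : μH[1] U = ‖Ψ‖₊ • μH[1] T := by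
    rw [hUT, hausdorffMeasure_smul_right_image]
  -- μH[1] T is positive and finite
  have hΨn : (‖Ψ‖₊ : ℝ≥0∞) ≠ 0 := by
    simpa using hΨ0
  have hΨt : (‖Ψ‖₊ : ℝ≥0∞) ≠ ⊤ := ENNReal.coe_ne_top
  have hT0 : μH[1] T ≠ 0 := by
    intro h
    rw [hUmeas, h] at hU0
    simp at hU0
  have hTt : μH[1] T ≠ ⊤ := by
    intro h
    rw [hUmeas, h] at hUt
    rw [ENNReal.smul_def, smul_eq_mul, ENNReal.mul_top hΨn] at hUt
    exact absurd hUt (lt_irrefl _)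
  -- main computation
  simp only [hmeas, ENNReal.smul_def, smul_eq_mul]
  rw [← Finset.sum_mul, ENNReal.mul_div_mul_right _ _ hT0 hTt]
  have hn : (0 : ℝ) < ∑ j, ‖ψ j‖ := by
    have hne : 0 < n := by
      rcases Nat.eq_zero_or_pos n with h | h
      · exfalso; apply hΨ0; subst h; simpa using hΨ
      · exact h
    exact Finset.sum_pos' (fun k _ => norm_nonneg _)
      ⟨⟨0, hne⟩, Finset.mem_univ _, norm_pos_iff.mpr (hψ0 _)⟩
  rw [ENNReal.ofReal_div_of_pos hn]
  have hsum : (∑ j, (‖ψ j‖₊ : ℝ≥0∞)) = ENNReal.ofReal (∑ j, ‖ψ j‖) := by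
    rw [ENNReal.ofReal_sum_of_nonneg (fun j _ => norm_nonneg _)]
    exact Finset.sum_congr rfl fun j _ => by rw [ENNReal.ofReal, norm_toNNReal]
  rw [hsum]
  congr 1
  rw [ENNReal.ofReal, norm_toNNReal]
end

section
/- Let Ψ = c₁ψ₁ + c₂ψ₂ in a complex Hilbert space with ψ₁, ψ₂ orthonormal and |c₁|² + |c₂|² = 1. For any measurable U ⊂ ℂΨ of finite positive 2-dimensional measure, with W₁ and W₂ the orthogonal projections of U onto ℂψ₁ and ℂψ₂, one has |W₁| = |c₁|²·|U|, |W₂| = |c₂|²·|U|, and |W₁| + |W₂| = |U|. -/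
open MeasureTheory
open scoped MeasureTheory
open scoped ENNReal NNReal Pointwise

lemma smul_isometry {H : Type*} [NormedAddCommGroup H] [InnerProductSpace ℂ H]
    (ψ : H) (hψ : ‖ψ‖ = 1) : Isometry (fun a : ℂ => a • ψ) := by
  apply Isometry.of_dist_eq
  intro a b
  simp [dist_eq_norm, ← sub_smul, norm_smul, hψ]

lemma coef_eq (c : ℂ) :
    ENNReal.ofReal (‖c‖ ^ 2) = (‖c‖₊ : ℝ≥0∞) ^ (2 : ℝ) := by
  rw [← ENNReal.coe_rpow_of_nonneg _ (by norm_num : (0:ℝ) ≤ 2)]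
  rw [show ((2:ℝ)) = ((2:ℕ):ℝ) by norm_num, NNReal.rpow_natCast]
  rw [ENNReal.ofReal_pow (norm_nonneg c), ← coe_nnnorm c, ENNReal.ofReal_coe_nnreal]
  push_cast
  ring

lemma key {H : Type*} [NormedAddCommGroup H] [InnerProductSpace ℂ H] [CompleteSpace H]
    [MeasurableSpace H] [BorelSpace H]
    (ψ : H) (hψ : ‖ψ‖ = 1) (c : ℂ) (Ψ : H) (hin : (inner ℂ ψ Ψ : ℂ) = c) (V : Set ℂ) :
    μH[2] ((fun x => (Submodule.orthogonalProjectionOnto (Submodule.span ℂ {ψ}) x : H)) ''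
        ((fun a : ℂ => a • Ψ) '' V)) = ENNReal.ofReal (‖c‖ ^ 2) * μH[2] V := by
  haveI : NullSingletonClass (μH[(2:ℝ)] : Measure ℂ) := MeasureTheory.Measure.noAtoms_hausdorff ℂ (by norm_num)
  have hproj : ∀ a : ℂ, ((Submodule.orthogonalProjectionOnto (Submodule.span ℂ {ψ}) (a • Ψ) : H)) =
      (c * a) • ψ := by
    intro a
    rw [Submodule.coe_orthogonalProjectionOnto_apply, Submodule.starProjection_singleton, inner_smul_right, hin, hψ]
    norm_num
    ring_nf
  rw [Set.image_image]
  simp_rw [hproj]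
  have : (fun a : ℂ => (c * a) • ψ) '' V = (fun b : ℂ => b • ψ) '' (c • V) := by
    rw [← Set.image_smul, Set.image_image]
    rfl
  rw [this, (smul_isometry ψ hψ).hausdorffMeasure_image (Or.inl (by norm_num))]
  rcases eq_or_ne c 0 with rfl | hc
  · simp only [map_zero, norm_zero, ne_eq, OfNat.ofNat_ne_zero, not_false_eq_true, zero_pow,
      ENNReal.ofReal_zero, zero_mul]
    rcases V.eq_empty_or_nonempty with rfl | hV
    · simp
    · rw [Set.zero_smul_set hV]
      exact measure_singleton 0
  · rw [Measure.hausdorffMeasure_smul₀ (by norm_num : (0:ℝ) ≤ 2) hc V, coef_eq]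
    simp [ENNReal.smul_def, ENNReal.coe_rpow_of_nonneg]

/-- For `Ψ = c₁ψ₁ + c₂ψ₂` with `ψ₁, ψ₂` orthonormal and `|c₁|² + |c₂|² = 1`,
and any measurable `U ⊆ ℂΨ` of finite positive 2-dimensional Hausdorff measure, the
orthogonal projections `W₁, W₂` of `U` onto `ℂψ₁, ℂψ₂` satisfy `|W₁| = |c₁|²|U|`,
`|W₂| = |c₂|²|U|` and `|W₁| + |W₂| = |U|`. -/
theorem stmt16 {H : Type*} [NormedAddCommGroup H] [InnerProductSpace ℂ H] [CompleteSpace H]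
    [MeasurableSpace H] [BorelSpace H]
    (ψ₁ ψ₂ : H) (h₁ : ‖ψ₁‖ = 1) (h₂ : ‖ψ₂‖ = 1) (h₁₂ : (inner ℂ ψ₁ ψ₂ : ℂ) = 0)
    (c₁ c₂ : ℂ) (hc : ‖c₁‖ ^ 2 + ‖c₂‖ ^ 2 = 1)
    (Ψ : H) (hΨ : Ψ = c₁ • ψ₁ + c₂ • ψ₂)
    (U : Set H) (hU : U ⊆ (Submodule.span ℂ {Ψ} : Submodule ℂ H)) (hUm : MeasurableSet U)
    (hU0 : 0 < μH[2] U) (hUt : μH[2] U < ⊤) :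
    μH[2] ((fun x => (Submodule.orthogonalProjectionOnto (Submodule.span ℂ {ψ₁}) x : H)) '' U)
        = ENNReal.ofReal (‖c₁‖ ^ 2) * μH[2] U
    ∧ μH[2] ((fun x => (Submodule.orthogonalProjectionOnto (Submodule.span ℂ {ψ₂}) x : H)) '' U)
        = ENNReal.ofReal (‖c₂‖ ^ 2) * μH[2] U
    ∧ μH[2] ((fun x => (Submodule.orthogonalProjectionOnto (Submodule.span ℂ {ψ₁}) x : H)) '' U)
        + μH[2] ((fun x => (Submodule.orthogonalProjectionOnto (Submodule.span ℂ {ψ₂}) x : H)) '' U)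
      = μH[2] U := by
  have h21 : (inner ℂ ψ₂ ψ₁ : ℂ) = 0 := by
    rw [← inner_conj_symm, h₁₂, map_zero]
  have hin1 : (inner ℂ ψ₁ Ψ : ℂ) = c₁ := by
    simp [hΨ, inner_add_right, inner_smul_right, h₁₂, inner_self_eq_norm_sq_to_K, h₁]
  have hin2 : (inner ℂ ψ₂ Ψ : ℂ) = c₂ := by
    simp [hΨ, inner_add_right, inner_smul_right, h21, inner_self_eq_norm_sq_to_K, h₂]
  have hΨ1 : ‖Ψ‖ = 1 := by
    have hsq : ‖Ψ‖ ^ 2 = 1 := by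
      rw [hΨ, norm_add_sq (𝕜 := ℂ)]
      have : (inner ℂ (c₁ • ψ₁) (c₂ • ψ₂) : ℂ) = 0 := by
        rw [inner_smul_left, inner_smul_right, h₁₂]; ring
      rw [this]
      simp only [norm_smul, map_zero, Complex.zero_re, mul_zero, add_zero, mul_pow, h₁, h₂]
      simpa using hc
    nlinarith [norm_nonneg Ψ]
  set V : Set ℂ := (fun a : ℂ => a • Ψ) ⁻¹' U with hV
  have hUeq : (fun a : ℂ => a • Ψ) '' V = U := by
    apply Set.Subset.antisymm
    · rintro x ⟨a, ha, rfl⟩; exact ha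
    · intro x hx
      obtain ⟨a, ha⟩ := Submodule.mem_span_singleton.mp (hU hx)
      exact ⟨a, by simpa [hV, ha] using hx, ha⟩
  have hμ : μH[2] U = μH[(2:ℝ)] V := by
    rw [← hUeq, (smul_isometry Ψ hΨ1).hausdorffMeasure_image (Or.inl (by norm_num))]
  have k1 := key ψ₁ h₁ c₁ Ψ hin1 V
  have k2 := key ψ₂ h₂ c₂ Ψ hin2 V
  rw [hUeq] at k1 k2
  refine ⟨by rw [k1, hμ], by rw [k2, hμ], ?_⟩
  rw [k1, k2, ← add_mul, ← ENNReal.ofReal_add (by positivity) (by positivity), hc,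
    ENNReal.ofReal_one, one_mul, hμ]
end
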